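/- Let n ≥ 1, let R be a finite commutative ℤ/n-algebra, and let S ⊆ R \ {0} be a subset with S = -S that is stable under the action of (ℤ/n)ˣ (i.e., u•s ∈ S for every u ∈ (ℤ/n)ˣ and s ∈ S). Then the Cayley graph Γ(R,S) is integral: every eigenvalue of its adjacency matrix is an integer. -/

import Mathlib

/-- Adjacency matrix (over ℂ) of the Cayley graph Γ(R,S):
`a` and `b` are adjacent iff `b - a ∈ S`. -/
noncomputable def cayleyAdj {R : Type*} [Ring R] (S : Set R) : Matrix R R ℂ :=
  fun a b => S.indicator (fun _ => (1 : ℂ)) (b - a)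

/-- The Cayley graph Γ(R,S) is integral: every eigenvalue of its adjacency matrix
is a (rational) integer. -/
def IsIntegralCayley {R : Type*} [Ring R] [Fintype R] (S : Set R) : Prop :=
  letI := Classical.decEq R
  spectrum ℂ (cayleyAdj S) ⊆ Set.range ((↑) : ℤ → ℂ)

open Finset in
/-- Characters are eigenvectors of the Cayley adjacency matrix. -/
lemma cayleyAdj_mulVec {R : Type*} [CommRing R] [Fintype R] [DecidableEq R]
    (S : Set R) [DecidablePred (· ∈ S)] (ψ : AddChar R ℂ) :
    (cayleyAdj S).mulVec ⇑ψ = (∑ s ∈ S.toFinset, ψ s) • ⇑ψ := by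
  funext a
  rw [Matrix.mulVec]
  show ∑ b, cayleyAdj S a b * ψ b = _
  rw [← Fintype.sum_equiv (Equiv.addRight a) _ (fun b => cayleyAdj S a b * ψ b) (fun s => rfl)]
  simp only [cayleyAdj, Equiv.coe_addRight, add_sub_cancel_right, Set.indicator_apply,
    AddChar.map_add_eq_mul]
  simp only [ite_mul, one_mul, zero_mul, Pi.smul_apply, smul_eq_mul, Finset.sum_mul]
  rw [← Finset.sum_filter]
  congr 1
  ext x
  simp [Set.mem_toFinset]


open Finset in
lemma spectrum_cayley_eq {R : Type*} [CommRing R] [Fintype R] [DecidableEq R]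
    (S : Set R) [DecidablePred (· ∈ S)] {μ : ℂ} (hμ : μ ∈ spectrum ℂ (cayleyAdj S)) :
    ∃ ψ : AddChar R ℂ, μ = ∑ s ∈ S.toFinset, ψ s := by
  rw [← AlgEquiv.spectrum_eq (Matrix.toLinAlgEquiv' : Matrix R R ℂ ≃ₐ[ℂ] _)] at hμ
  have hev : Module.End.HasEigenvalue (Matrix.toLinAlgEquiv' (cayleyAdj S)) μ :=
    Module.End.hasEigenvalue_iff_mem_spectrum.mpr hμ
  obtain ⟨v, hv⟩ := hev.exists_hasEigenvector
  have hv1 := hv.apply_eq_smul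
  have hv0 := hv.right
  classical
  let b := AddChar.complexBasis R
  set c : AddChar R ℂ →₀ ℂ := b.repr v with hc
  have hvsum : v = ∑ χ : AddChar R ℂ, c χ • ⇑χ := by
    conv_lhs => rw [← b.sum_repr v]
    refine Finset.sum_congr rfl fun χ _ => by rw [AddChar.complexBasis_apply]
  have hTv : Matrix.toLinAlgEquiv' (cayleyAdj S) v
      = ∑ χ : AddChar R ℂ, (c χ * ∑ s ∈ S.toFinset, χ s) • ⇑χ := by
    rw [hvsum, map_sum]
    refine Finset.sum_congr rfl fun χ _ => ?_
    rw [map_smul]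
    have : Matrix.toLinAlgEquiv' (cayleyAdj S) ⇑χ = (∑ s ∈ S.toFinset, χ s) • ⇑χ :=
      cayleyAdj_mulVec S χ
    rw [this, smul_smul]
  have hμv : Matrix.toLinAlgEquiv' (cayleyAdj S) v = ∑ χ : AddChar R ℂ, (μ * c χ) • ⇑χ := by
    rw [hv1, hvsum, Finset.smul_sum]
    refine Finset.sum_congr rfl fun χ _ => by rw [smul_smul]
  -- compare coefficients
  have hco : ∀ χ : AddChar R ℂ, c χ * ∑ s ∈ S.toFinset, χ s = μ * c χ := by
    intro χ
    have h1 := congrArg (fun w => b.repr w χ) (hTv.symm.trans hμv)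
    have e1 : ∀ d : AddChar R ℂ → ℂ,
        b.repr (∑ χ' : AddChar R ℂ, d χ' • ⇑χ') χ = d χ := by
      intro d
      have : (∑ χ' : AddChar R ℂ, d χ' • ⇑χ') = ∑ χ' : AddChar R ℂ, d χ' • b χ' := by
        refine Finset.sum_congr rfl fun χ' _ => by rw [AddChar.complexBasis_apply]
      rw [this, b.repr_sum_self]
    simpa only [e1] using h1
  have hcne : ∃ χ : AddChar R ℂ, c χ ≠ 0 := by
    by_contra h
    push_neg at h
    apply hv0
    rw [hvsum]
    simp [h]
  obtain ⟨χ, hχ⟩ := hcne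
  refine ⟨χ, ?_⟩
  have h := hco χ
  rw [mul_comm (c χ)] at h
  exact (mul_right_cancel₀ hχ h).symm


open Finset in
lemma sum_char_mem_int (n : ℕ) (hn : 1 ≤ n) {R : Type*} [CommRing R] [Fintype R] [DecidableEq R]
    [Algebra (ZMod n) R] (S : Set R) [DecidablePred (· ∈ S)]
    (hstab : ∀ (u : (ZMod n)ˣ), ∀ s ∈ S, ((u : ZMod n) • s) ∈ S) (ψ : AddChar R ℂ) :
    ∃ m : ℤ, (m : ℂ) = ∑ s ∈ S.toFinset, ψ s := by
  have hn0 : n ≠ 0 := by omega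
  haveI : NeZero n := ⟨hn0⟩
  have npos : 0 < n := hn
  have hsmul : ∀ (k : ℕ) (x : R), (k : ZMod n) • x = k • x := by
    intro k x
    rw [Algebra.smul_def, map_natCast, nsmul_eq_mul]
  have hroot : ∀ x : R, ψ x ^ n = 1 := by
    intro x
    rw [← AddChar.map_nsmul_eq_pow]
    have h0 : n • x = 0 := by
      rw [← hsmul, ZMod.natCast_self, zero_smul]
    rw [h0, AddChar.map_zero_eq_one]
  set n' : ℕ+ := ⟨n, npos⟩ with hn'
  set K := CyclotomicField n' ℚ with hK
  haveI : NeZero (n' : ℕ) := ⟨n'.ne_zero⟩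
  haveI : NeZero ((n' : ℕ) : ℚ) := ⟨Nat.cast_ne_zero.mpr n'.ne_zero⟩
  haveI : IsCyclotomicExtension {(n' : ℕ)} ℚ K :=
    CyclotomicField.isCyclotomicExtension (n' : ℕ) ℚ
  haveI : FiniteDimensional ℚ K := IsCyclotomicExtension.finite (S := {(n' : ℕ)}) (A := ℚ) (B := K)
  haveI : IsGalois ℚ K := IsCyclotomicExtension.isGalois {(n' : ℕ)} ℚ K
  haveI : Algebra.IsAlgebraic ℚ K := Algebra.IsAlgebraic.of_finite ℚ K
  let φ : K →ₐ[ℚ] ℂ := IsAlgClosed.lift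
  have hinj : Function.Injective φ := φ.toRingHom.injective
  set ζK := IsCyclotomicExtension.zeta n' ℚ K with hζK
  have hζ : IsPrimitiveRoot ζK n := IsCyclotomicExtension.zeta_spec n' ℚ K
  have hζC : IsPrimitiveRoot (φ ζK) n := hζ.map_of_injective hinj
  have hlift : ∀ x : R, ∃ y : K, y ^ n = 1 ∧ φ y = ψ x := by
    intro x
    obtain ⟨i, _, hi⟩ := hζC.eq_pow_of_pow_eq_one (hroot x)
    refine ⟨ζK ^ i, ?_, by rw [map_pow, hi]⟩
    rw [← pow_mul, mul_comm, pow_mul, hζ.pow_eq_one, one_pow]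
  set Ψ : R → K := fun x => (hlift x).choose with hΨ
  have hΨ1 : ∀ x, (Ψ x) ^ n = 1 := fun x => (hlift x).choose_spec.1
  have hΨ2 : ∀ x, φ (Ψ x) = ψ x := fun x => (hlift x).choose_spec.2
  set Λ : K := ∑ s ∈ S.toFinset, Ψ s with hΛ
  have hφΛ : φ Λ = ∑ s ∈ S.toFinset, ψ s := by
    rw [hΛ, map_sum]
    exact Finset.sum_congr rfl fun s _ => hΨ2 s
  have hfix : ∀ σ : K ≃ₐ[ℚ] K, σ Λ = Λ := by
    intro σ
    have hσζ : IsPrimitiveRoot (σ ζK) n := hζ.map_of_injective σ.injective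
    obtain ⟨k, hkn, hk⟩ := hζ.eq_pow_of_pow_eq_one hσζ.pow_eq_one
    have hcop : Nat.Coprime k n := (hζ.pow_iff_coprime npos k).mp (hk ▸ hσζ)
    have hσpow : ∀ y : K, y ^ n = 1 → σ y = y ^ k := by
      intro y hy
      obtain ⟨i, _, hi⟩ := hζ.eq_pow_of_pow_eq_one hy
      rw [← hi, map_pow, ← hk, ← pow_mul, mul_comm k i, pow_mul]
    set u : (ZMod n)ˣ := ZMod.unitOfCoprime k hcop with hu
    have hψpow : ∀ s : R, (Ψ s) ^ k = Ψ ((u : ZMod n) • s) := by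
      intro s
      apply hinj
      rw [map_pow, hΨ2, hΨ2]
      have h1 : ((u : ZMod n) • s) = k • s := by
        rw [← hsmul]
        congr 1
      rw [h1, AddChar.map_nsmul_eq_pow]
    rw [hΛ, map_sum]
    rw [Finset.sum_congr rfl (fun s _ => by rw [hσpow _ (hΨ1 s), hψpow s] :
      ∀ s ∈ S.toFinset, σ (Ψ s) = Ψ ((u : ZMod n) • s))]
    refine Finset.sum_nbij' (i := fun s => (u : ZMod n) • s)
      (j := fun t => ((u⁻¹ : (ZMod n)ˣ) : ZMod n) • t) ?_ ?_ ?_ ?_ ?_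
    · intro a ha
      rw [Set.mem_toFinset] at ha ⊢
      exact hstab u a ha
    · intro a ha
      rw [Set.mem_toFinset] at ha ⊢
      exact hstab u⁻¹ a ha
    · intro a _
      show ((u⁻¹ : (ZMod n)ˣ) : ZMod n) • ((u : ZMod n) • a) = a
      rw [smul_smul, ← Units.val_mul, inv_mul_cancel, Units.val_one, one_smul]
    · intro a _
      show ((u : (ZMod n)ˣ) : ZMod n) • (((u⁻¹ : (ZMod n)ˣ) : ZMod n) • a) = a
      rw [smul_smul, ← Units.val_mul, mul_inv_cancel, Units.val_one, one_smul]
    · intro a _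
      rfl
  have hbot : Λ ∈ (⊥ : IntermediateField ℚ K) := by
    have htop : IntermediateField.fixedField (⊤ : Subgroup (K ≃ₐ[ℚ] K)) = ⊥ :=
      OrderIso.map_bot (IsGalois.intermediateFieldEquivSubgroup (F := ℚ) (E := K)).symm
    rw [← htop]
    exact fun g => hfix g
  obtain ⟨q, hq⟩ := IntermediateField.mem_bot.mp hbot
  have hint : IsIntegral ℤ Λ := by
    refine IsIntegral.sum _ fun s _ => ⟨Polynomial.X ^ n - 1, ?_, ?_⟩
    · simpa using Polynomial.monic_X_pow_sub_C (1 : ℤ) hn0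
    · simp [hΨ1 s]
  rw [← hq] at hint
  have hqint : IsIntegral ℤ q :=
    (isIntegral_algebraMap_iff (algebraMap ℚ K).injective).mp hint
  obtain ⟨m, hm⟩ := IsIntegrallyClosed.isIntegral_iff.mp hqint
  refine ⟨m, ?_⟩
  have key : (algebraMap ℚ ℂ) q = ∑ s ∈ S.toFinset, ψ s := by
    rw [← hφΛ, ← hq, φ.commutes]
  rw [← key, ← hm]
  simp

theorem integral_of_stable (n : ℕ) (hn : 1 ≤ n) (R : Type*) [CommRing R] [Fintype R]
    [Algebra (ZMod n) R] (S : Set R) (hS0 : S ⊆ {x : R | x ≠ 0}) (hSneg : S = -S)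
    (hstab : ∀ (u : (ZMod n)ˣ), ∀ s ∈ S, ((u : ZMod n) • s) ∈ S) :
    IsIntegralCayley S := by
  classical
  intro μ hμ
  obtain ⟨ψ, rfl⟩ := spectrum_cayley_eq S hμ
  obtain ⟨m, hm⟩ := sum_char_mem_int n hn S hstab ψ
  exact ⟨m, hm⟩
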